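/- Let x_1, ..., x_N be real numbers and suppose c_n, C_n are complex numbers with |c_n| ≤ C_n for all n (so in particular each C_n is a nonnegative real). Then ∫_{-T}^{T} |∑_{n=1}^{N} c_n e^{2πi x_n t}|² dt ≤ 3 ∫_{-T}^{T} |∑_{n=1}^{N} C_n e^{2πi x_n t}|² dt. -/

import Mathlib

open Real MeasureTheory Complex intervalIntegral

noncomputable section MajorantAux

namespace MajorantAux

/-- The exponential `e(ξ t) = exp(2πiξt)`. -/
def ce (ξ t : ℝ) : ℂ := Complex.exp (2 * π * Complex.I * ξ * t)

lemma continuous_ce (ξ : ℝ) : Continuous fun t => ce ξ t := by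
  unfold ce; fun_prop

lemma ce_mul_conj (ξ η t : ℝ) :
    ce ξ t * (starRingEnd ℂ) (ce η t) = ce (ξ - η) t := by
  unfold ce
  rw [← Complex.exp_conj, ← Complex.exp_add]
  congr 1
  simp only [map_mul, Complex.conj_I, Complex.conj_ofReal, map_ofNat]
  push_cast
  ring

lemma ce_add (ξ a b : ℝ) : ce ξ (a + b) = ce ξ a * ce ξ b := by
  unfold ce
  rw [← Complex.exp_add]
  congr 1
  push_cast
  ring

lemma ce_zero (ξ : ℝ) : ce ξ 0 = 1 := by simp [ce]

lemma abs_ce (ξ t : ℝ) : ‖ce ξ t‖ = 1 := by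
  have h : ce ξ t = Complex.exp ((2 * π * ξ * t : ℝ) * Complex.I) := by
    unfold ce; congr 1; push_cast; ring
  rw [h, Complex.norm_exp_ofReal_mul_I]

lemma conj_ce (ξ t : ℝ) : (starRingEnd ℂ) (ce ξ t) = ce ξ (-t) := by
  unfold ce
  rw [← Complex.exp_conj]
  congr 1
  simp only [map_mul, Complex.conj_I, Complex.conj_ofReal, map_ofNat]
  push_cast
  ring

lemma intervalIntegral_conj {f : ℝ → ℂ} {a b : ℝ} :
    (∫ x in a..b, (starRingEnd ℂ) (f x)) = (starRingEnd ℂ) (∫ x in a..b, f x) := by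
  simp [intervalIntegral, ← integral_conj, map_sub]

/-- The kernel `K L ξ = ∫_{-L}^{L} e(ξ u) du`. -/
def K (L ξ : ℝ) : ℂ := ∫ u in (-L)..L, ce ξ u

lemma K_eq_re (L ξ : ℝ) : K L ξ = ((K L ξ).re : ℂ) := by
  have h : (starRingEnd ℂ) (K L ξ) = K L ξ := by
    unfold K
    rw [← intervalIntegral_conj]
    simp_rw [conj_ce]
    rw [intervalIntegral.integral_comp_neg (fun t => ce ξ t)]
    simp
  exact (Complex.conj_eq_iff_re.mp h).symm

variable {N : ℕ}

/-- The exponential sum. -/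
def S (x : Fin N → ℝ) (c : Fin N → ℂ) (t : ℝ) : ℂ := ∑ n, c n * ce (x n) t

lemma continuous_S (x : Fin N → ℝ) (c : Fin N → ℂ) : Continuous (S x c) := by
  unfold S
  exact continuous_finset_sum _ fun n _ => continuous_const.mul (continuous_ce (x n))

lemma S_mul_conj (x : Fin N → ℝ) (c : Fin N → ℂ) (w : ℝ) :
    S x c w * (starRingEnd ℂ) (S x c w)
      = ∑ m, ∑ n, (c m * (starRingEnd ℂ) (c n)) * ce (x m - x n) w := by
  unfold S
  rw [map_sum, Finset.sum_mul_sum]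
  refine Finset.sum_congr rfl fun m _ => Finset.sum_congr rfl fun n _ => ?_
  rw [map_mul, ← ce_mul_conj (x m) (x n) w]
  ring

lemma inner_integral (x : Fin N → ℝ) (c : Fin N → ℂ) (L a : ℝ) :
    (∫ u in (-L)..L, S x c (a + u) * (starRingEnd ℂ) (S x c (a + u)))
      = ∑ m, ∑ n, (c m * (starRingEnd ℂ) (c n)) * ce (x m - x n) a * K L (x m - x n) := by
  have h1 : ∀ u : ℝ, S x c (a + u) * (starRingEnd ℂ) (S x c (a + u))
      = ∑ m, ∑ n, ((c m * (starRingEnd ℂ) (c n)) * ce (x m - x n) a) * ce (x m - x n) u := by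
    intro u
    rw [S_mul_conj]
    refine Finset.sum_congr rfl fun m _ => Finset.sum_congr rfl fun n _ => ?_
    rw [ce_add]; ring
  simp_rw [h1]
  rw [intervalIntegral.integral_finset_sum]
  · refine Finset.sum_congr rfl fun m _ => ?_
    rw [intervalIntegral.integral_finset_sum]
    · refine Finset.sum_congr rfl fun n _ => ?_
      rw [intervalIntegral.integral_const_mul]
      rfl
    · intro n _
      exact (continuous_const.mul (continuous_ce _)).intervalIntegrable _ _
  · intro m _
    refine (continuous_finset_sum _ fun n _ => ?_).intervalIntegrable _ _
    exact continuous_const.mul (continuous_ce _)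

lemma double_integral (x : Fin N → ℝ) (c : Fin N → ℂ) (L s : ℝ) :
    (∫ v in (-L)..L, ∫ u in (-L)..L, S x c (s + u + v) * (starRingEnd ℂ) (S x c (s + u + v)))
      = ∑ m, ∑ n, (c m * (starRingEnd ℂ) (c n)) * ce (x m - x n) s * (K L (x m - x n)) ^ 2 := by
  have h1 : ∀ v : ℝ, (∫ u in (-L)..L, S x c (s + u + v) * (starRingEnd ℂ) (S x c (s + u + v)))
      = ∑ m, ∑ n, ((c m * (starRingEnd ℂ) (c n)) * ce (x m - x n) s * K L (x m - x n))
          * ce (x m - x n) v := by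
    intro v
    have h2 : ∀ u : ℝ, s + u + v = (s + v) + u := fun u => by ring
    simp_rw [h2]
    rw [inner_integral]
    refine Finset.sum_congr rfl fun m _ => Finset.sum_congr rfl fun n _ => ?_
    rw [ce_add]; ring
  simp_rw [h1]
  rw [intervalIntegral.integral_finset_sum]
  · refine Finset.sum_congr rfl fun m _ => ?_
    rw [intervalIntegral.integral_finset_sum]
    · refine Finset.sum_congr rfl fun n _ => ?_
      rw [intervalIntegral.integral_const_mul]
      show _ * K L _ = _
      ring
    · intro n _
      exact (continuous_const.mul (continuous_ce _)).intervalIntegrable _ _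
  · intro m _
    refine (continuous_finset_sum _ fun n _ => ?_).intervalIntegrable _ _
    exact continuous_const.mul (continuous_ce _)

lemma ofReal_double (x : Fin N → ℝ) (c : Fin N → ℂ) (L s : ℝ) :
    ((∫ v in (-L)..L, ∫ u in (-L)..L, ‖S x c (s + u + v)‖ ^ 2 : ℝ) : ℂ)
      = ∫ v in (-L)..L, ∫ u in (-L)..L,
          S x c (s + u + v) * (starRingEnd ℂ) (S x c (s + u + v)) := by
  rw [← intervalIntegral.integral_ofReal]
  refine intervalIntegral.integral_congr fun v _ => ?_
  rw [← intervalIntegral.integral_ofReal]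
  refine intervalIntegral.integral_congr fun u _ => ?_
  rw [Complex.sq_norm]
  exact (Complex.mul_conj _).symm

/-- The real double integral `Qr g L s = ∫∫_{[-L,L]²} g(s+u+v)`. -/
def Qr (g : ℝ → ℝ) (L s : ℝ) : ℝ := ∫ v in (-L)..L, ∫ u in (-L)..L, g (s + u + v)

lemma stepB (x : Fin N → ℝ) (c : Fin N → ℂ) (C : Fin N → ℝ)
    (h : ∀ n, ‖c n‖ ≤ C n) (L s : ℝ) :
    Qr (fun t => ‖S x c t‖ ^ 2) L s
      ≤ Qr (fun t => ‖S x (fun n => (C n : ℂ)) t‖ ^ 2) L 0 := by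
  have hcast : ∀ (d : Fin N → ℂ) (s' : ℝ),
      ((Qr (fun t => ‖S x d t‖ ^ 2) L s' : ℝ) : ℂ)
        = ∑ m, ∑ n, (d m * (starRingEnd ℂ) (d n)) * ce (x m - x n) s'
            * (K L (x m - x n)) ^ 2 :=
    fun d s' => (ofReal_double x d L s').trans (double_integral x d L s')
  have hQC : Qr (fun t => ‖S x (fun n => (C n : ℂ)) t‖ ^ 2) L 0
      = ∑ m, ∑ n, (C m * C n) * ((K L (x m - x n)).re) ^ 2 := by
    apply Complex.ofReal_injective
    rw [hcast (fun n => (C n : ℂ)) 0]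
    push_cast
    simp_rw [← K_eq_re]
    refine Finset.sum_congr rfl fun m _ => Finset.sum_congr rfl fun n _ => ?_
    rw [ce_zero, Complex.conj_ofReal]
    ring
  have habs : Qr (fun t => ‖S x c t‖ ^ 2) L s
      ≤ ∑ m, ∑ n, (C m * C n) * ((K L (x m - x n)).re) ^ 2 := by
    calc Qr (fun t => ‖S x c t‖ ^ 2) L s
        ≤ |Qr (fun t => ‖S x c t‖ ^ 2) L s| := le_abs_self _
      _ = ‖((Qr (fun t => ‖S x c t‖ ^ 2) L s : ℝ) : ℂ)‖ := by
          rw [Complex.norm_real, Real.norm_eq_abs]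
      _ = ‖∑ m, ∑ n, (c m * (starRingEnd ℂ) (c n)) * ce (x m - x n) s
            * (K L (x m - x n)) ^ 2‖ := by rw [hcast c s]
      _ ≤ ∑ m, ∑ n, ‖(c m * (starRingEnd ℂ) (c n)) * ce (x m - x n) s
            * (K L (x m - x n)) ^ 2‖ :=
          (norm_sum_le _ _).trans (Finset.sum_le_sum fun m _ => norm_sum_le _ _)
      _ ≤ ∑ m, ∑ n, (C m * C n) * ((K L (x m - x n)).re) ^ 2 := by
          refine Finset.sum_le_sum fun m _ => Finset.sum_le_sum fun n _ => ?_
          rw [norm_mul, norm_mul, norm_mul, abs_ce, Complex.norm_conj, norm_pow]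
          have hK : ‖K L (x m - x n)‖ = |(K L (x m - x n)).re| := by
            rw [K_eq_re, Complex.norm_real]
            simp
          rw [hK, mul_one, _root_.sq_abs]
          have h1 : 0 ≤ ((K L (x m - x n)).re) ^ 2 := sq_nonneg _
          have h2 : 0 ≤ ‖c n‖ := norm_nonneg _
          have h3 : 0 ≤ ‖c m‖ := norm_nonneg _
          have h4 : 0 ≤ C m := h3.trans (h m)
          gcongr
          · exact h m
          · exact h n
  exact habs.trans_eq hQC.symm


section RealSide

variable {f : ℝ → ℝ}

lemma inner_shift (g : ℝ → ℝ) (L s v : ℝ) :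
    (∫ u in (-L)..L, g (s + u + v)) = ∫ t in (s + v - L)..(s + v + L), g t := by
  have h1 : (fun u : ℝ => g (s + u + v)) = fun u : ℝ => g (u + (s + v)) := by
    funext u; congr 1; ring
  rw [h1, intervalIntegral.integral_comp_add_right]
  congr 1 <;> ring

lemma gcont (hf : Continuous f) (L s : ℝ) :
    Continuous fun v => ∫ u in (-L)..L, f (s + u + v) := by
  have h1 : Continuous (Function.uncurry fun (v u : ℝ) => f (s + u + v)) := by
    apply hf.comp
    fun_prop
  exact intervalIntegral.continuous_parametric_intervalIntegral_of_continuous' h1 _ _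

lemma stepA (hf : Continuous f) (hnn : ∀ t, 0 ≤ f t) (L : ℝ) (hL : 0 < L) :
    2 * L * (∫ t in (-(2 * L))..(2 * L), f t)
      ≤ Qr f L (-(2 * L)) + Qr f L 0 + Qr f L (2 * L) := by
  have hfi : ∀ a b : ℝ, IntervalIntegrable f volume a b := fun a b =>
    hf.intervalIntegrable a b
  have key : ∀ v ∈ Set.Icc (-L) L,
      (∫ t in (-(2 * L))..(2 * L), f t)
        ≤ (∫ u in (-L)..L, f (-(2 * L) + u + v)) + (∫ u in (-L)..L, f (0 + u + v))
            + (∫ u in (-L)..L, f (2 * L + u + v)) := by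
    intro v hv
    obtain ⟨hv1, hv2⟩ := hv
    rw [inner_shift, inner_shift, inner_shift]
    rw [show -(2 * L) + v - L = v - 3 * L by ring, show -(2 * L) + v + L = v - L by ring,
      show (0 : ℝ) + v - L = v - L by ring, show (0 : ℝ) + v + L = v + L by ring,
      show 2 * L + v - L = v + L by ring, show 2 * L + v + L = v + 3 * L by ring]
    rw [intervalIntegral.integral_add_adjacent_intervals (hfi _ _) (hfi _ _),
      intervalIntegral.integral_add_adjacent_intervals (hfi _ _) (hfi _ _)]
    exact intervalIntegral.integral_mono_interval (by linarith) (by linarith) (by linarith)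
      (Filter.Eventually.of_forall fun t => hnn t) (hfi _ _)
  have hint : ∀ s : ℝ, IntervalIntegrable (fun v => ∫ u in (-L)..L, f (s + u + v))
      volume (-L) L := fun s => (gcont hf L s).intervalIntegrable _ _
  have hmono := intervalIntegral.integral_mono_on (μ := volume) (by linarith : -L ≤ L)
    (intervalIntegrable_const) (((hint _).add (hint _)).add (hint _)) key
  rw [intervalIntegral.integral_const] at hmono
  have heq : (∫ v in (-L)..L, ((∫ u in (-L)..L, f (-(2 * L) + u + v))
      + (∫ u in (-L)..L, f (0 + u + v)) + (∫ u in (-L)..L, f (2 * L + u + v))))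
      = Qr f L (-(2 * L)) + Qr f L 0 + Qr f L (2 * L) := by
    rw [intervalIntegral.integral_add ((hint _).add (hint _)) (hint _),
      intervalIntegral.integral_add (hint _) (hint _)]
    rfl
  rw [heq] at hmono
  calc 2 * L * (∫ t in (-(2 * L))..(2 * L), f t)
      = (L - -L) • (∫ t in (-(2 * L))..(2 * L), f t) := by
        rw [smul_eq_mul]; ring
    _ ≤ _ := hmono

lemma stepC (hf : Continuous f) (hnn : ∀ t, 0 ≤ f t) (L : ℝ) (hL : 0 < L) :
    Qr f L 0 ≤ 2 * L * (∫ t in (-(2 * L))..(2 * L), f t) := by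
  have hfi : ∀ a b : ℝ, IntervalIntegrable f volume a b := fun a b =>
    hf.intervalIntegrable a b
  have key : ∀ v ∈ Set.Icc (-L) L,
      (∫ u in (-L)..L, f (0 + u + v)) ≤ ∫ t in (-(2 * L))..(2 * L), f t := by
    intro v hv
    obtain ⟨hv1, hv2⟩ := hv
    rw [inner_shift]
    exact intervalIntegral.integral_mono_interval (by linarith) (by linarith) (by linarith)
      (Filter.Eventually.of_forall fun t => hnn t) (hfi _ _)
  have hint : IntervalIntegrable (fun v => ∫ u in (-L)..L, f (0 + u + v))
      volume (-L) L := (gcont hf L 0).intervalIntegrable _ _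
  have hmono := intervalIntegral.integral_mono_on (μ := volume) (by linarith : -L ≤ L)
    hint (intervalIntegrable_const) key
  rw [intervalIntegral.integral_const] at hmono
  calc Qr f L 0 ≤ (L - -L) • (∫ t in (-(2 * L))..(2 * L), f t) := hmono
    _ = 2 * L * (∫ t in (-(2 * L))..(2 * L), f t) := by rw [smul_eq_mul]; ring

end RealSide

end MajorantAux

end MajorantAux

open MajorantAux

theorem majorant_principle (N : ℕ) (T : ℝ) (hT : 0 < T)
    (x : Fin N → ℝ) (c : Fin N → ℂ) (C : Fin N → ℝ)
    (h : ∀ n, ‖c n‖ ≤ C n) :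
    ∫ t in (-T)..T, ‖∑ n, c n * Complex.exp (2 * π * Complex.I * (x n) * t)‖ ^ 2 ≤
      3 * ∫ t in (-T)..T,
        ‖∑ n, (C n : ℂ) * Complex.exp (2 * π * Complex.I * (x n) * t)‖ ^ 2 := by
  obtain ⟨L, rfl⟩ : ∃ L : ℝ, T = 2 * L := ⟨T / 2, by ring⟩
  have hL : 0 < L := by linarith
  show (∫ t in (-(2 * L))..(2 * L), ‖S x c t‖ ^ 2)
      ≤ 3 * ∫ t in (-(2 * L))..(2 * L), ‖S x (fun n => (C n : ℂ)) t‖ ^ 2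
  have hcf : Continuous fun t => ‖S x c t‖ ^ 2 :=
    (continuous_S x c).norm.pow 2
  have hcF : Continuous fun t => ‖S x (fun n => (C n : ℂ)) t‖ ^ 2 :=
    (continuous_S x _).norm.pow 2
  have hnnf : ∀ t : ℝ, 0 ≤ ‖S x c t‖ ^ 2 := fun t => by positivity
  have hnnF : ∀ t : ℝ, 0 ≤ ‖S x (fun n => (C n : ℂ)) t‖ ^ 2 := fun t => by positivity
  have hA := stepA hcf hnnf L hL
  have hB1 := stepB x c C h L (-(2 * L))
  have hB2 := stepB x c C h L 0
  have hB3 := stepB x c C h L (2 * L)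
  have hC' := stepC hcF hnnF L hL
  nlinarith [hA, hB1, hB2, hB3, hC', hL]
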